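/- Let H = H(α, β, γ) be a quiver down-up algebra with β_i = 0 for some i. Then the relation element r = d_{i-1} u_{i-1} − α_i u_i d_i − γ_i e_i ∈ e_i H e_i satisfies r · u_i = 0 and d_i · r = 0 with r ≠ 0 and u_i ≠ 0 and d_i ≠ 0; hence H is not a piecewise domain with respect to the vertex idempotents e_0, …, e_{n-1}. -/
import Mathlib


/-- Generators of the path algebra of the doubled `n`-cycle quiver:
vertices `e i`, arrows `u i : i → i+1` and `d i : i+1 → i`. -/
inductive DUGen (n : ℕ) : Type
  | e : ZMod n → DUGen n
  | u : ZMod n → DUGen n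
  | d : ZMod n → DUGen n

variable (k : Type*) [Field k] (n : ℕ)

/-- The trivial path `e_i` in the free algebra. -/
def Ew (i : ZMod n) : FreeAlgebra k (DUGen n) := FreeAlgebra.ι k (DUGen.e i)
/-- The arrow `u_i : i → i+1` in the free algebra. -/
def Uw (i : ZMod n) : FreeAlgebra k (DUGen n) := FreeAlgebra.ι k (DUGen.u i)
/-- The arrow `d_i : i+1 → i` in the free algebra. -/
def Dw (i : ZMod n) : FreeAlgebra k (DUGen n) := FreeAlgebra.ι k (DUGen.d i)

variable [NeZero n]

/-- The relations presenting the quiver down-up algebra `H(α,β,γ)`: the path algebra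
relations for the doubled `n`-cycle quiver, together with the down-up relations
`d_{i-1}u_{i-1}u_i = α_i u_i d_i u_i + β_i u_i u_{i+1} d_{i+1} + γ_i u_i` and
`d_i d_{i-1} u_{i-1} = α_i d_i u_i d_i + β_i u_{i+1} d_{i+1} d_i + γ_i d_i`. -/
inductive DURel (α β γ : ZMod n → k) :
    FreeAlgebra k (DUGen n) → FreeAlgebra k (DUGen n) → Prop
  | ortho (i j : ZMod n) :
      DURel α β γ (Ew k n i * Ew k n j) (if i = j then Ew k n i else 0)
  | total : DURel α β γ (∑ i : ZMod n, Ew k n i) 1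
  | eu (i : ZMod n) : DURel α β γ (Ew k n i * Uw k n i) (Uw k n i)
  | ue (i : ZMod n) : DURel α β γ (Uw k n i * Ew k n (i+1)) (Uw k n i)
  | ed (i : ZMod n) : DURel α β γ (Ew k n (i+1) * Dw k n i) (Dw k n i)
  | de (i : ZMod n) : DURel α β γ (Dw k n i * Ew k n i) (Dw k n i)
  | rel1 (i : ZMod n) : DURel α β γ (Dw k n (i-1) * Uw k n (i-1) * Uw k n i)
      (α i • (Uw k n i * Dw k n i * Uw k n i)
        + β i • (Uw k n i * Uw k n (i+1) * Dw k n (i+1)) + γ i • Uw k n i)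
  | rel2 (i : ZMod n) : DURel α β γ (Dw k n i * Dw k n (i-1) * Uw k n (i-1))
      (α i • (Dw k n i * Uw k n i * Dw k n i)
        + β i • (Uw k n (i+1) * Dw k n (i+1) * Dw k n i) + γ i • Dw k n i)

/-- The quiver down-up algebra `H(α,β,γ)`. -/
abbrev Hdu (α β γ : ZMod n → k) := RingQuot (DURel k n α β γ)

variable (α β γ : ZMod n → k)

/-- The image of the trivial path `e_i` in `H(α,β,γ)`. -/
def eH (i : ZMod n) : Hdu k n α β γ := RingQuot.mkAlgHom k (DURel k n α β γ) (Ew k n i)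
/-- The image of the arrow `u_i` in `H(α,β,γ)`. -/
def uH (i : ZMod n) : Hdu k n α β γ := RingQuot.mkAlgHom k (DURel k n α β γ) (Uw k n i)
/-- The image of the arrow `d_i` in `H(α,β,γ)`. -/
def dH (i : ZMod n) : Hdu k n α β γ := RingQuot.mkAlgHom k (DURel k n α β γ) (Dw k n i)

namespace DUAux

variable {k : Type*} [Field k] {n : ℕ}

/-- Vertex projection operator. -/
def Eop (p j : ZMod n) : (ℕ → k) →ₗ[k] (ℕ → k) where
  toFun f m := if p - (m : ZMod n) = j then f m else 0
  map_add' f g := funext fun m => by dsimp; split_ifs <;> simp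
  map_smul' a f := funext fun m => by dsimp; split_ifs <;> simp

/-- Raising operator. -/
def Uop (p j : ZMod n) : (ℕ → k) →ₗ[k] (ℕ → k) where
  toFun f m := match m with
    | 0 => 0
    | t+1 => if p - ((t+1 : ℕ) : ZMod n) = j then f t else 0
  map_add' f g := funext fun m => by
    cases m with
    | zero => simp
    | succ t => dsimp; split_ifs <;> simp
  map_smul' a f := funext fun m => by
    cases m with
    | zero => simp
    | succ t => dsimp; split_ifs <;> simp

/-- Lowering operator with weights `lam`. -/
def Dop (lam : ℕ → k) (p j : ZMod n) : (ℕ → k) →ₗ[k] (ℕ → k) where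
  toFun f m := if p - (m : ZMod n) = j + 1 then lam (m+1) * f (m+1) else 0
  map_add' f g := funext fun m => by dsimp; split_ifs <;> simp [mul_add]
  map_smul' a f := funext fun m => by
    dsimp
    split_ifs
    · show lam (m+1) * (a • f) (m+1) = a * (lam (m+1) * f (m+1))
      simp only [Pi.smul_apply, smul_eq_mul]; ring
    · simp

@[simp] theorem Eop_apply (p j : ZMod n) (f : ℕ → k) (m : ℕ) :
    Eop p j f m = if p - (m : ZMod n) = j then f m else 0 := rfl

@[simp] theorem Uop_apply_zero (p j : ZMod n) (f : ℕ → k) : Uop p j f 0 = 0 := rfl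

@[simp] theorem Uop_apply_succ (p j : ZMod n) (f : ℕ → k) (t : ℕ) :
    Uop p j f (t+1) = if p - ((t+1 : ℕ) : ZMod n) = j then f t else 0 := rfl

@[simp] theorem Dop_apply (lam : ℕ → k) (p j : ZMod n) (f : ℕ → k) (m : ℕ) :
    Dop lam p j f m = if p - (m : ZMod n) = j + 1 then lam (m+1) * f (m+1) else 0 := rfl

variable (lam : ℕ → k) (p : ZMod n)

theorem Eop_mul_Eop (i j : ZMod n) :
    Eop p i * Eop p j = if i = j then (Eop p i : Module.End k (ℕ → k)) else 0 := by
  split_ifs with h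
  · subst h
    refine LinearMap.ext fun f => funext fun m => ?_
    simp only [Module.End.mul_apply, Eop_apply]
    split_ifs <;> simp_all
  · refine LinearMap.ext fun f => funext fun m => ?_
    simp only [Module.End.mul_apply, Eop_apply, LinearMap.zero_apply, Pi.zero_apply]
    split_ifs with h1 h2 <;> try rfl
    exact (h (h1.symm.trans h2)).elim

theorem sum_Eop [NeZero n] : (∑ j : ZMod n, (Eop p j : Module.End k (ℕ → k))) = 1 := by
  refine LinearMap.ext fun f => funext fun m => ?_
  simp only [LinearMap.coe_sum, Finset.sum_apply, Eop_apply, Module.End.one_apply]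
  rw [Finset.sum_ite_eq]
  simp

theorem Eop_mul_Uop (j : ZMod n) : Eop p j * Uop p j = (Uop p j : Module.End k (ℕ → k)) := by
  refine LinearMap.ext fun f => funext fun m => ?_
  cases m with
  | zero => simp
  | succ t => simp only [Module.End.mul_apply, Eop_apply, Uop_apply_succ]; split_ifs <;> simp_all

theorem Uop_mul_Eop (j : ZMod n) :
    Uop p j * Eop p (j+1) = (Uop p j : Module.End k (ℕ → k)) := by
  refine LinearMap.ext fun f => funext fun m => ?_
  cases m with
  | zero => simp
  | succ t =>
    simp only [Module.End.mul_apply, Uop_apply_succ, Eop_apply]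
    push_cast
    split_ifs with h h2
    · rfl
    · exact (h2 (by linear_combination h)).elim
    · rfl

theorem Eop_mul_Dop (j : ZMod n) :
    Eop p (j+1) * Dop lam p j = (Dop lam p j : Module.End k (ℕ → k)) := by
  refine LinearMap.ext fun f => funext fun m => ?_
  simp only [Module.End.mul_apply, Eop_apply, Dop_apply]
  split_ifs <;> simp_all

theorem Dop_mul_Eop (j : ZMod n) :
    Dop lam p j * Eop p j = (Dop lam p j : Module.End k (ℕ → k)) := by
  refine LinearMap.ext fun f => funext fun m => ?_
  simp only [Module.End.mul_apply, Dop_apply, Eop_apply]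
  push_cast
  split_ifs with h h2
  · rfl
  · exact (h2 (by linear_combination h)).elim
  · rfl


variable {α β γ : ZMod n → k}

theorem rel1_op (hl0 : lam 0 = 0)
    (hrec : ∀ m : ℕ, lam (m+2) = α (p - ((m+1:ℕ) : ZMod n)) * lam (m+1)
      + β (p - ((m+1:ℕ) : ZMod n)) * lam m + γ (p - ((m+1:ℕ) : ZMod n))) (j : ZMod n) :
    Dop lam p (j-1) * Uop p (j-1) * Uop p j
      = α j • (Uop p j * Dop lam p j * Uop p j)
        + β j • (Uop p j * Uop p (j+1) * Dop lam p (j+1))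
        + γ j • (Uop p j : Module.End k (ℕ → k)) := by
  refine LinearMap.ext fun f => funext fun m => ?_
  simp only [Module.End.mul_apply, LinearMap.add_apply, LinearMap.smul_apply, Pi.add_apply,
    Pi.smul_apply, smul_eq_mul]
  cases m with
  | zero => simp
  | succ t =>
    cases t with
    | zero =>
      simp only [Dop_apply, Uop_apply_succ, Uop_apply_zero]
      rw [sub_add_cancel]
      have e2 : (p - ((0+1+1:ℕ) : ZMod n) = j - 1) = (p - ((0+1:ℕ) : ZMod n) = j) := by
        refine propext ⟨fun h => ?_, fun h => ?_⟩ <;> push_cast at h ⊢ <;> linear_combination h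
      have e3 : (p - ((0:ℕ) : ZMod n) = j + 1) = (p - ((0+1:ℕ) : ZMod n) = j) := by
        refine propext ⟨fun h => ?_, fun h => ?_⟩ <;> push_cast at h ⊢ <;> linear_combination h
      simp only [e2, e3]
      split_ifs with hc
      · rw [show 0+1+1 = 0+2 from rfl, hrec 0, hc, hl0]
        ring
      · ring
    | succ s =>
      simp only [Dop_apply, Uop_apply_succ, Uop_apply_zero]
      rw [sub_add_cancel]
      have e2 : (p - ((s+1+1+1:ℕ) : ZMod n) = j - 1) = (p - ((s+1+1:ℕ) : ZMod n) = j) := by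
        refine propext ⟨fun h => ?_, fun h => ?_⟩ <;> push_cast at h ⊢ <;> linear_combination h
      have e3 : (p - ((s+1:ℕ) : ZMod n) = j + 1) = (p - ((s+1+1:ℕ) : ZMod n) = j) := by
        refine propext ⟨fun h => ?_, fun h => ?_⟩ <;> push_cast at h ⊢ <;> linear_combination h
      have e5 : (p - ((s:ℕ) : ZMod n) = j + 1 + 1) = (p - ((s+1+1:ℕ) : ZMod n) = j) := by
        refine propext ⟨fun h => ?_, fun h => ?_⟩ <;> push_cast at h ⊢ <;> linear_combination h
      simp only [e2, e3, e5]
      split_ifs with hc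
      · rw [show s+1+1+1 = s+1+2 from rfl, hrec (s+1), hc]
        ring
      · ring

theorem rel2_op (hl0 : lam 0 = 0)
    (hrec : ∀ m : ℕ, lam (m+2) = α (p - ((m+1:ℕ) : ZMod n)) * lam (m+1)
      + β (p - ((m+1:ℕ) : ZMod n)) * lam m + γ (p - ((m+1:ℕ) : ZMod n))) (j : ZMod n) :
    Dop lam p j * Dop lam p (j-1) * Uop p (j-1)
      = α j • (Dop lam p j * Uop p j * Dop lam p j)
        + β j • (Uop p (j+1) * Dop lam p (j+1) * Dop lam p j)
        + γ j • (Dop lam p j : Module.End k (ℕ → k)) := by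
  refine LinearMap.ext fun f => funext fun m => ?_
  simp only [Module.End.mul_apply, LinearMap.add_apply, LinearMap.smul_apply, Pi.add_apply,
    Pi.smul_apply, smul_eq_mul]
  cases m with
  | zero =>
    simp only [Dop_apply, Uop_apply_succ, Uop_apply_zero]
    rw [sub_add_cancel]
    have e2 : (p - ((0+1+1:ℕ) : ZMod n) = j - 1) = (p - ((0:ℕ) : ZMod n) = j + 1) := by
      refine propext ⟨fun h => ?_, fun h => ?_⟩ <;> push_cast at h ⊢ <;> linear_combination h
    have e3 : (p - ((0+1:ℕ) : ZMod n) = j) = (p - ((0:ℕ) : ZMod n) = j + 1) := by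
      refine propext ⟨fun h => ?_, fun h => ?_⟩ <;> push_cast at h ⊢ <;> linear_combination h
    simp only [e2, e3]
    split_ifs with hc
    · have hj : p - ((0+1:ℕ):ZMod n) = j := by
        push_cast; push_cast at hc; linear_combination hc
      rw [show 0+1+1 = 0+2 from rfl, hrec 0, hj, hl0]
      ring
    · ring
  | succ s =>
    simp only [Dop_apply, Uop_apply_succ, Uop_apply_zero]
    rw [sub_add_cancel]
    have e2 : (p - ((s+1+1+1:ℕ) : ZMod n) = j - 1) = (p - ((s+1:ℕ) : ZMod n) = j + 1) := by
      refine propext ⟨fun h => ?_, fun h => ?_⟩ <;> push_cast at h ⊢ <;> linear_combination h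
    have e3 : (p - ((s+1+1:ℕ) : ZMod n) = j) = (p - ((s+1:ℕ) : ZMod n) = j + 1) := by
      refine propext ⟨fun h => ?_, fun h => ?_⟩ <;> push_cast at h ⊢ <;> linear_combination h
    have e5 : (p - ((s:ℕ) : ZMod n) = j + 1 + 1) = (p - ((s+1:ℕ) : ZMod n) = j + 1) := by
      refine propext ⟨fun h => ?_, fun h => ?_⟩ <;> push_cast at h ⊢ <;> linear_combination h
    simp only [e2, e3, e5]
    split_ifs with hc
    · have hj : p - ((s+1+1:ℕ):ZMod n) = j := by
        push_cast; push_cast at hc; linear_combination hc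
      rw [show s+1+1+1 = s+1+2 from rfl, hrec (s+1), hj]
      ring
    · ring


section Rep

def lamSeq (α β γ : ZMod n → k) (p : ZMod n) (c : k) : ℕ → k
  | 0 => 0
  | 1 => c
  | (m+2) => α (p - ((m+1:ℕ) : ZMod n)) * lamSeq α β γ p c (m+1)
      + β (p - ((m+1:ℕ) : ZMod n)) * lamSeq α β γ p c m + γ (p - ((m+1:ℕ) : ZMod n))

/-- The images of the generators. -/
def toGen (lam : ℕ → k) (p : ZMod n) : DUGen n → Module.End k (ℕ → k)
  | .e j => Eop p j
  | .u j => Uop p j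
  | .d j => Dop lam p j

/-- The representation of the free algebra. -/
noncomputable def rep (lam : ℕ → k) (p : ZMod n) :
    FreeAlgebra k (DUGen n) →ₐ[k] Module.End k (ℕ → k) :=
  FreeAlgebra.lift k (toGen lam p)

@[simp] theorem rep_Ew (lam : ℕ → k) (p j : ZMod n) : rep lam p (Ew k n j) = Eop p j := by
  simp [rep, Ew, toGen]

@[simp] theorem rep_Uw (lam : ℕ → k) (p j : ZMod n) : rep lam p (Uw k n j) = Uop p j := by
  simp [rep, Uw, toGen]

@[simp] theorem rep_Dw (lam : ℕ → k) (p j : ZMod n) : rep lam p (Dw k n j) = Dop lam p j := by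
  simp [rep, Dw, toGen]

variable [NeZero n]

theorem rep_preserves (lam : ℕ → k) (p : ZMod n) (hl0 : lam 0 = 0)
    (hrec : ∀ m : ℕ, lam (m+2) = α (p - ((m+1:ℕ) : ZMod n)) * lam (m+1)
      + β (p - ((m+1:ℕ) : ZMod n)) * lam m + γ (p - ((m+1:ℕ) : ZMod n))) :
    ∀ ⦃x y⦄, DURel k n α β γ x y → rep lam p x = rep lam p y := by
  intro x y h
  cases h with
  | ortho i j =>
      rw [map_mul, rep_Ew, rep_Ew, Eop_mul_Eop]
      split_ifs with h <;> simp
  | total => simp only [map_sum, rep_Ew, map_one, sum_Eop]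
  | eu i => rw [map_mul, rep_Ew, rep_Uw]; exact Eop_mul_Uop p i
  | ue i => rw [map_mul, rep_Uw, rep_Ew]; exact Uop_mul_Eop p i
  | ed i => rw [map_mul, rep_Ew, rep_Dw]; exact Eop_mul_Dop lam p i
  | de i => rw [map_mul, rep_Dw, rep_Ew]; exact Dop_mul_Eop lam p i
  | rel1 i =>
      simp only [map_mul, map_add, map_smul, rep_Uw, rep_Dw]
      exact rel1_op lam p hl0 hrec i
  | rel2 i =>
      simp only [map_mul, map_add, map_smul, rep_Uw, rep_Dw]
      exact rel2_op lam p hl0 hrec i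

/-- The induced representation of the quiver down-up algebra. -/
noncomputable def quotRep (α β γ : ZMod n → k) (p : ZMod n) (c : k) :
    Hdu k n α β γ →ₐ[k] Module.End k (ℕ → k) :=
  RingQuot.liftAlgHom k ⟨rep (lamSeq α β γ p c) p,
    rep_preserves (lamSeq α β γ p c) p rfl (fun _ => rfl)⟩

theorem quotRep_eH (α β γ : ZMod n → k) (p c) (j : ZMod n) :
    quotRep α β γ p c (eH k n α β γ j) = Eop p j := by
  rw [eH, quotRep, RingQuot.liftAlgHom_mkAlgHom_apply, rep_Ew]

theorem quotRep_uH (α β γ : ZMod n → k) (p c) (j : ZMod n) :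
    quotRep α β γ p c (uH k n α β γ j) = Uop p j := by
  rw [uH, quotRep, RingQuot.liftAlgHom_mkAlgHom_apply, rep_Uw]

theorem quotRep_dH (α β γ : ZMod n → k) (p c) (j : ZMod n) :
    quotRep α β γ p c (dH k n α β γ j) = Dop (lamSeq α β γ p c) p j := by
  rw [dH, quotRep, RingQuot.liftAlgHom_mkAlgHom_apply, rep_Dw]

end Rep

end DUAux

/-- If `β_i = 0` for some `i`, then `r = d_{i-1}u_{i-1} − α_i u_i d_i − γ_i e_i`
satisfies `r·u_i = 0` and `d_i·r = 0` with `r, u_i, d_i` all nonzero; hence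
`H(α,β,γ)` is not a piecewise domain with respect to the vertex idempotents. -/
theorem stmt10 (i : ZMod n) (hβ : β i = 0) :
    (dH k n α β γ (i-1) * uH k n α β γ (i-1) - α i • (uH k n α β γ i * dH k n α β γ i)
        - γ i • eH k n α β γ i) * uH k n α β γ i = 0 ∧
    dH k n α β γ i * (dH k n α β γ (i-1) * uH k n α β γ (i-1)
        - α i • (uH k n α β γ i * dH k n α β γ i) - γ i • eH k n α β γ i) = 0 ∧
    (dH k n α β γ (i-1) * uH k n α β γ (i-1) - α i • (uH k n α β γ i * dH k n α β γ i)
        - γ i • eH k n α β γ i) ≠ 0 ∧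
    uH k n α β γ i ≠ 0 ∧ dH k n α β γ i ≠ 0 ∧
    ¬ (∀ (i' k' j' : ZMod n) (a b : Hdu k n α β γ),
        eH k n α β γ i' * a * eH k n α β γ k' = a →
        eH k n α β γ k' * b * eH k n α β γ j' = b →
        a * b = 0 → a = 0 ∨ b = 0) := by
  classical
  open DUAux in
  -- identities coming from the defining relations
  have heu : eH k n α β γ i * uH k n α β γ i = uH k n α β γ i := by
    have h := RingQuot.mkAlgHom_rel k (DURel.eu (k := k) (n := n) (α := α) (β := β) (γ := γ) i)
    rw [map_mul] at h; exact h
  have hue2 : uH k n α β γ i * eH k n α β γ (i+1) = uH k n α β γ i := by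
    have h := RingQuot.mkAlgHom_rel k (DURel.ue (k := k) (n := n) (α := α) (β := β) (γ := γ) i)
    rw [map_mul] at h; exact h
  have hue1 : uH k n α β γ (i-1) * eH k n α β γ i = uH k n α β γ (i-1) := by
    have h := RingQuot.mkAlgHom_rel k
      (DURel.ue (k := k) (n := n) (α := α) (β := β) (γ := γ) (i-1))
    rw [sub_add_cancel, map_mul] at h; exact h
  have hed1 : eH k n α β γ i * dH k n α β γ (i-1) = dH k n α β γ (i-1) := by
    have h := RingQuot.mkAlgHom_rel k
      (DURel.ed (k := k) (n := n) (α := α) (β := β) (γ := γ) (i-1))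
    rw [sub_add_cancel, map_mul] at h; exact h
  have hde : dH k n α β γ i * eH k n α β γ i = dH k n α β γ i := by
    have h := RingQuot.mkAlgHom_rel k (DURel.de (k := k) (n := n) (α := α) (β := β) (γ := γ) i)
    rw [map_mul] at h; exact h
  have hee : eH k n α β γ i * eH k n α β γ i = eH k n α β γ i := by
    have h := RingQuot.mkAlgHom_rel k
      (DURel.ortho (k := k) (n := n) (α := α) (β := β) (γ := γ) i i)
    rw [if_pos rfl, map_mul] at h; exact h
  have key1 : dH k n α β γ (i-1) * uH k n α β γ (i-1) * uH k n α β γ i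
      = α i • (uH k n α β γ i * dH k n α β γ i * uH k n α β γ i) + γ i • uH k n α β γ i := by
    have h := RingQuot.mkAlgHom_rel k
      (DURel.rel1 (k := k) (n := n) (α := α) (β := β) (γ := γ) i)
    simp only [map_mul, map_add, map_smul, hβ, zero_smul, add_zero] at h
    exact h
  have key2 : dH k n α β γ i * dH k n α β γ (i-1) * uH k n α β γ (i-1)
      = α i • (dH k n α β γ i * uH k n α β γ i * dH k n α β γ i) + γ i • dH k n α β γ i := by
    have h := RingQuot.mkAlgHom_rel k
      (DURel.rel2 (k := k) (n := n) (α := α) (β := β) (γ := γ) i)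
    simp only [map_mul, map_add, map_smul, hβ, zero_smul, add_zero] at h
    exact h
  -- part 1
  have p1 : (dH k n α β γ (i-1) * uH k n α β γ (i-1) - α i • (uH k n α β γ i * dH k n α β γ i)
      - γ i • eH k n α β γ i) * uH k n α β γ i = 0 := by
    rw [sub_mul, sub_mul, smul_mul_assoc, smul_mul_assoc, key1, heu,
      mul_assoc (uH k n α β γ i) (dH k n α β γ i) (uH k n α β γ i)]
    rw [← mul_assoc (uH k n α β γ i) (dH k n α β γ i) (uH k n α β γ i)]
    rw [add_sub_cancel_left, sub_self]
  -- part 2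
  have p2 : dH k n α β γ i * (dH k n α β γ (i-1) * uH k n α β γ (i-1)
      - α i • (uH k n α β γ i * dH k n α β γ i) - γ i • eH k n α β γ i) = 0 := by
    rw [mul_sub, mul_sub, mul_smul_comm, mul_smul_comm, hde,
      ← mul_assoc (dH k n α β γ i) (dH k n α β γ (i-1)) (uH k n α β γ (i-1)),
      ← mul_assoc (dH k n α β γ i) (uH k n α β γ i) (dH k n α β γ i), key2,
      add_sub_cancel_left, sub_self]
  -- part 4 : u_i ≠ 0
  have p4 : uH k n α β γ i ≠ 0 := by
    intro h
    have h2 := congrArg (quotRep α β γ (i+1) 1) h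
    rw [quotRep_uH, map_zero] at h2
    have h3 := congrFun (congrArg
      (fun T : Module.End k (ℕ → k) => T (fun m => if m = 0 then (1:k) else 0)) h2) 1
    simp only [LinearMap.zero_apply, Pi.zero_apply] at h3
    rw [show (1:ℕ) = 0 + 1 from rfl, Uop_apply_succ,
      if_pos (by push_cast; ring : (i+1) - ((0+1:ℕ) : ZMod n) = i)] at h3
    simp at h3
  -- part 5 : d_i ≠ 0
  have p5 : dH k n α β γ i ≠ 0 := by
    intro h
    have h2 := congrArg (quotRep α β γ (i+1) 1) h
    rw [quotRep_dH, map_zero] at h2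
    have h3 := congrFun (congrArg
      (fun T : Module.End k (ℕ → k) => T (fun m => if m = 1 then (1:k) else 0)) h2) 0
    simp only [LinearMap.zero_apply, Pi.zero_apply] at h3
    rw [Dop_apply, if_pos (by push_cast; ring : (i+1) - ((0:ℕ) : ZMod n) = i + 1)] at h3
    have hone : lamSeq α β γ (i+1) 1 (0+1) = 1 := rfl
    rw [hone] at h3
    simp at h3
  -- part 3 : r ≠ 0
  have p3 : dH k n α β γ (i-1) * uH k n α β γ (i-1) - α i • (uH k n α β γ i * dH k n α β γ i)
      - γ i • eH k n α β γ i ≠ 0 := by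
    intro h
    have h2 := congrArg (quotRep α β γ i (γ i + 1)) h
    simp only [map_sub, map_smul, map_mul, quotRep_eH, quotRep_uH, quotRep_dH, map_zero] at h2
    have h3 := congrFun (congrArg
      (fun T : Module.End k (ℕ → k) => T (fun m => if m = 0 then (1:k) else 0)) h2) 0
    simp only [LinearMap.zero_apply, Pi.zero_apply, LinearMap.sub_apply, Pi.sub_apply,
      LinearMap.smul_apply, Pi.smul_apply, smul_eq_mul, Module.End.mul_apply] at h3
    rw [Dop_apply, if_pos (by push_cast; ring : i - ((0:ℕ) : ZMod n) = (i-1) + 1),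
      Uop_apply_succ, if_pos (by push_cast; ring : i - ((0+1:ℕ) : ZMod n) = i - 1),
      Uop_apply_zero, Eop_apply, if_pos (by push_cast; ring : i - ((0:ℕ) : ZMod n) = i)] at h3
    have hone : lamSeq α β γ i (γ i + 1) (0+1) = γ i + 1 := rfl
    rw [hone] at h3
    simp at h3
  refine ⟨p1, p2, p3, p4, p5, ?_⟩
  intro hpd
  have ha : eH k n α β γ i * (dH k n α β γ (i-1) * uH k n α β γ (i-1)
      - α i • (uH k n α β γ i * dH k n α β γ i) - γ i • eH k n α β γ i) * eH k n α β γ i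
      = dH k n α β γ (i-1) * uH k n α β γ (i-1)
        - α i • (uH k n α β γ i * dH k n α β γ i) - γ i • eH k n α β γ i := by
    rw [mul_sub, mul_sub, mul_smul_comm, mul_smul_comm, sub_mul, sub_mul,
      smul_mul_assoc, smul_mul_assoc,
      ← mul_assoc (eH k n α β γ i) (dH k n α β γ (i-1)) (uH k n α β γ (i-1)), hed1,
      mul_assoc (dH k n α β γ (i-1)) (uH k n α β γ (i-1)) (eH k n α β γ i), hue1,
      ← mul_assoc (eH k n α β γ i) (uH k n α β γ i) (dH k n α β γ i), heu,
      mul_assoc (uH k n α β γ i) (dH k n α β γ i) (eH k n α β γ i), hde,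
      hee, hee]
  have hb : eH k n α β γ i * uH k n α β γ i * eH k n α β γ (i+1) = uH k n α β γ i := by
    rw [heu, hue2]
  rcases hpd i i (i+1) _ _ ha hb p1 with h | h
  · exact p3 h
  · exact p4 h
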